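/- Let G be a finite group, T a normal subgroup with G = RT for a Sylow r-subgroup R of G, and suppose H = N_G(R₀) is the unique maximal subgroup of G containing R, where R₀ = R ∩ T. Then the following are equivalent: (i) N_G(R₀) = N_G(R); (ii) G = O_r(H)T; (iii) [R, H ∩ T] ≤ R₀. -/

import Mathlib

open scoped Pointwise
open scoped commutatorElement


/-- The `r`-core `O_r(H)` of a subgroup `H` of `G`, viewed as a subgroup of `G`: the join of
all `r`-subgroups of `H` that are normal in `H` (for finite `H` this is the largest normal
`r`-subgroup of `H`). -/
def pCoreIn (r : ℕ) {G : Type*} [Group G] (H : Subgroup G) : Subgroup G :=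
  ⨆ P ∈ {P : Subgroup G |
      P ≤ H ∧ IsPGroup r ↥P ∧ ∀ h ∈ H, ∀ p ∈ P, h * p * h⁻¹ ∈ P}, P

/-- Lemma 8.1 (core equivalences): let `G` be a finite group with a normal subgroup `T` and
a Sylow `r`-subgroup `R` with `G = RT`, let `R₀ = R ⊓ T`, and suppose `H = N_G(R₀)` is the
unique maximal subgroup of `G` containing `R`. Then the following are equivalent:
(i) `N_G(R₀) = N_G(R)`; (ii) `G = O_r(H)T`; (iii) `[R, H ⊓ T] ≤ R₀`. -/
theorem stmt_17 {G : Type*} [Group G] [Finite G] {r : ℕ} (hr : r.Prime)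
    (T : Subgroup G) [T.Normal] (R : Sylow r G)
    (hG : (R : Subgroup G) ⊔ T = ⊤)
    (H : Subgroup G) (hHdef : H = Subgroup.normalizer (((R : Subgroup G) ⊓ T : Subgroup G) : Set G))
    (hH : IsCoatom H) (hRH : (R : Subgroup G) ≤ H)
    (huniq : ∀ H' : Subgroup G, IsCoatom H' → (R : Subgroup G) ≤ H' → H' = H) :
    ((Subgroup.normalizer (((R : Subgroup G) ⊓ T : Subgroup G) : Set G) = Subgroup.normalizer ((R : Subgroup G) : Set G)) ↔
        pCoreIn r H ⊔ T = ⊤) ∧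
    ((pCoreIn r H ⊔ T = ⊤) ↔
        ⁅(R : Subgroup G), H ⊓ T⁆ ≤ (R : Subgroup G) ⊓ T) := by
  classical
  have hT : T.Normal := inferInstance
  set R0 : Subgroup G := (R : Subgroup G) ⊓ T with hR0
  set S : Set (Subgroup G) := {P : Subgroup G |
      P ≤ H ∧ IsPGroup r ↥P ∧ ∀ h ∈ H, ∀ p ∈ P, h * p * h⁻¹ ∈ P} with hS
  set Q : Subgroup G := pCoreIn r H with hQ
  have hQdef : Q = ⨆ P ∈ S, P := rfl
  -- every member of S is contained in R
  have hPleR : ∀ P ∈ S, P ≤ (R : Subgroup G) := by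
    intro P hP
    obtain ⟨hPH, hPp, hPc⟩ := hP
    have hnorm : (R : Subgroup G) ≤ Subgroup.normalizer (P : Set G) := by
      intro x hx
      rw [Subgroup.mem_normalizer_iff]
      intro p
      constructor
      · intro hp; exact hPc x (hRH hx) p hp
      · intro hp
        have h2 := hPc x⁻¹ (hRH (inv_mem hx)) _ hp
        have h3 : x⁻¹ * (x * p * x⁻¹) * x⁻¹⁻¹ = p := by group
        rwa [h3] at h2
    have hsup : IsPGroup r ↥((R : Subgroup G) ⊔ P) :=
      IsPGroup.to_sup_of_normal_right' R.2 hPp hnorm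
    have heq : (R : Subgroup G) ⊔ P = (R : Subgroup G) := R.3 hsup le_sup_left
    exact le_sup_right.trans heq.le
  have hQR : Q ≤ (R : Subgroup G) := by
    rw [hQdef]; exact iSup₂_le hPleR
  have hQH : Q ≤ H := hQR.trans hRH
  -- Q is closed under conjugation by H
  have hQconj : ∀ h ∈ H, ∀ q ∈ Q, h * q * h⁻¹ ∈ Q := by
    intro h hh q hq
    have hmap : Q.map ((MulAut.conj h).toMonoidHom) ≤ Q := by
      rw [hQdef]
      simp only [Subgroup.map_iSup]
      refine iSup₂_le ?_
      intro P hP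
      rintro x hx
      simp only [Subgroup.mem_map] at hx
      obtain ⟨p, hp, rfl⟩ := hx
      have : (MulAut.conj h).toMonoidHom p = h * p * h⁻¹ := rfl
      rw [this]
      have hmem : h * p * h⁻¹ ∈ P := hP.2.2 h hh p hp
      exact (le_iSup₂ (f := fun (P : Subgroup G) (_ : P ∈ S) => P) P hP) hmem
    have : h * q * h⁻¹ ∈ Q.map ((MulAut.conj h).toMonoidHom) :=
      ⟨q, hq, rfl⟩
    exact hmap this
  -- H normalizes R0
  have hHnormR0 : ∀ h ∈ H, ∀ p ∈ R0, h * p * h⁻¹ ∈ R0 := by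
    intro h hh p hp
    have : h ∈ Subgroup.normalizer (R0 : Set G) := by rw [← hHdef]; exact hh
    exact (Subgroup.mem_normalizer_iff.mp this p).mp hp
  -- decomposition G = R * T
  have hdec : ∀ g : G, ∃ x ∈ (R : Subgroup G), ∃ t ∈ T, x * t = g := by
    intro g
    have hg : g ∈ ((R : Subgroup G) ⊔ T) := by rw [hG]; exact Subgroup.mem_top g
    have hg2 : g ∈ (((R : Subgroup G) ⊔ T : Subgroup G) : Set G) := hg
    rw [Subgroup.mul_normal] at hg2
    exact hg2
  -- (i) → (ii)
  have h12 : Subgroup.normalizer (R0 : Set G) = Subgroup.normalizer ((R : Subgroup G) : Set G) → Q ⊔ T = ⊤ := by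
    intro h1
    have hRnorm : ∀ h ∈ H, ∀ x ∈ (R : Subgroup G), h * x * h⁻¹ ∈ (R : Subgroup G) := by
      intro h hh x hx
      have : h ∈ Subgroup.normalizer ((R : Subgroup G) : Set G) := by rw [← h1, ← hHdef]; exact hh
      exact (Subgroup.mem_normalizer_iff.mp this x).mp hx
    have hRS : (R : Subgroup G) ∈ S := ⟨hRH, R.2, hRnorm⟩
    have hRQ : (R : Subgroup G) ≤ Q := by
      rw [hQdef]
      exact le_iSup₂ (f := fun (P : Subgroup G) (_ : P ∈ S) => P) _ hRS
    have : (R : Subgroup G) ⊔ T ≤ Q ⊔ T := sup_le_sup_right hRQ T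
    rw [hG] at this
    exact le_antisymm le_top this
  -- (ii) → (iii)
  have h23 : Q ⊔ T = ⊤ → ⁅(R : Subgroup G), H ⊓ T⁆ ≤ R0 := by
    intro h2
    rw [Subgroup.commutator_le]
    intro x hx y hy
    obtain ⟨hyH, hyT⟩ := Subgroup.mem_inf.mp hy
    -- decompose x = q * t with q ∈ Q, t ∈ R0
    have hx' : x ∈ (Q : Set G) * (T : Set G) := by
      have h' : x ∈ ((Q ⊔ T : Subgroup G) : Set G) := by rw [h2]; exact Subgroup.mem_top x
      rwa [Subgroup.mul_normal] at h'
    obtain ⟨q, hq, t, ht, hqt⟩ := hx'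
    have hqR : q ∈ (R : Subgroup G) := hQR hq
    have htR0 : t ∈ R0 := by
      have htR : t ∈ (R : Subgroup G) := by
        have : t = q⁻¹ * x := by rw [← hqt]; group
        rw [this]; exact mul_mem (inv_mem hqR) hx
      exact Subgroup.mem_inf.mpr ⟨htR, ht⟩
    -- key identity
    have key : ⁅x, y⁆ = (q * ⁅t, y⁆ * q⁻¹) * ⁅q, y⁆ := by
      rw [← hqt]; simp only [commutatorElement_def]; group
    have hty : ⁅t, y⁆ ∈ R0 := by
      have e : ⁅t, y⁆ = t * (y * t⁻¹ * y⁻¹) := by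
        simp only [commutatorElement_def]; group
      rw [e]
      exact mul_mem htR0 (hHnormR0 y hyH t⁻¹ (inv_mem htR0))
    have hconj : q * ⁅t, y⁆ * q⁻¹ ∈ R0 := hHnormR0 q (hRH hqR) _ hty
    have hqy : ⁅q, y⁆ ∈ R0 := by
      have hQmem : ⁅q, y⁆ ∈ Q := by
        have e : ⁅q, y⁆ = q * (y * q⁻¹ * y⁻¹) := by
          simp only [commutatorElement_def]; group
        rw [e]
        exact mul_mem hq (hQconj y hyH q⁻¹ (inv_mem hq))
      have hTmem : ⁅q, y⁆ ∈ T := by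
        have e : ⁅q, y⁆ = (q * y * q⁻¹) * y⁻¹ := by
          exact commutatorElement_def q y
        rw [e]
        exact mul_mem (hT.conj_mem y hyT q) (inv_mem hyT)
      exact Subgroup.mem_inf.mpr ⟨hQR hQmem, hTmem⟩
    rw [key]
    exact mul_mem hconj hqy
  -- (iii) → (i)
  have h31 : ⁅(R : Subgroup G), H ⊓ T⁆ ≤ R0 → Subgroup.normalizer (R0 : Set G) = Subgroup.normalizer ((R : Subgroup G) : Set G) := by
    intro h3
    have hH0norm : ∀ y ∈ H ⊓ T, y ∈ Subgroup.normalizer ((R : Subgroup G) : Set G) := by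
      have hc : ∀ y ∈ H ⊓ T, ∀ x ∈ (R : Subgroup G), y * x * y⁻¹ ∈ (R : Subgroup G) := by
        intro y hy x hx
        have hcm : ⁅y, x⁆ ∈ R0 := by
          have : ⁅y, x⁆ ∈ ⁅H ⊓ T, (R : Subgroup G)⁆ :=
            Subgroup.commutator_mem_commutator hy hx
          rw [Subgroup.commutator_comm] at this
          exact h3 this
        have e : y * x * y⁻¹ = ⁅y, x⁆ * x := by
          simp only [commutatorElement_def]; group
        rw [e]
        exact mul_mem ((Subgroup.mem_inf.mp hcm).1) hx
      intro y hy
      rw [Subgroup.mem_normalizer_iff]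
      intro x
      constructor
      · intro hx; exact hc y hy x hx
      · intro hx
        have h2 := hc y⁻¹ (inv_mem hy) _ hx
        have e : y⁻¹ * (y * x * y⁻¹) * y⁻¹⁻¹ = x := by group
        rwa [e] at h2
    apply le_antisymm
    · intro g hg
      have hgH : g ∈ H := by rw [hHdef]; exact hg
      obtain ⟨x, hx, t, ht, hxt⟩ := hdec g
      have htH : t ∈ H := by
        have : t = x⁻¹ * g := by rw [← hxt]; group
        rw [this]; exact mul_mem (inv_mem (hRH hx)) hgH
      have h1 : x ∈ Subgroup.normalizer ((R : Subgroup G) : Set G) := Subgroup.le_normalizer hx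
      have h2 : t ∈ Subgroup.normalizer ((R : Subgroup G) : Set G) :=
        hH0norm t (Subgroup.mem_inf.mpr ⟨htH, ht⟩)
      rw [← hxt]
      exact mul_mem h1 h2
    · intro g hg
      rw [Subgroup.mem_normalizer_iff] at hg ⊢
      intro p
      simp only [hR0, Subgroup.mem_inf]
      constructor
      · rintro ⟨hp1, hp2⟩
        exact ⟨(hg p).mp hp1, hT.conj_mem p hp2 g⟩
      · rintro ⟨hp1, hp2⟩
        refine ⟨(hg p).mpr hp1, ?_⟩
        have h2 := hT.conj_mem _ hp2 g⁻¹
        have e : g⁻¹ * (g * p * g⁻¹) * g⁻¹⁻¹ = p := by group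
        rwa [e] at h2
  exact ⟨⟨h12, fun h => h31 (h23 h)⟩, ⟨h23, fun h => h12 (h31 h)⟩⟩
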